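/- Let Ξ₁ and Ξ₂ be nonempty finite sets, let 𝒫₁ be a nonempty subset of Δ^{Ξ₁}, and for each ξ₁ ∈ Ξ₁ let 𝒫₂(ξ₁) be a nonempty subset of Δ^{Ξ₂}. Let 𝒫 be the rectangular set of joint distributions μ on Ξ₁×Ξ₂ of the form μ(ξ₁,ξ₂) = p(ξ₁)·q_{ξ₁}(ξ₂) with p ∈ 𝒫₁ and q_{ξ₁} ∈ 𝒫₂(ξ₁) for every ξ₁. Then for every f : Ξ₁×Ξ₂ → ℝ, sup_{μ∈𝒫} Σ_{ξ₁,ξ₂} μ(ξ₁,ξ₂)·f(ξ₁,ξ₂) = sup_{p∈𝒫₁} Σ_{ξ₁} p(ξ₁) · ( sup_{q∈𝒫₂(ξ₁)} Σ_{ξ₂} q(ξ₂)·f(ξ₁,ξ₂) ). -/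

import Mathlib

/-- **Rectangular ambiguity sets decompose the worst case into nested worst cases.**
If `𝒫` consists of all joint distributions `μ(ξ₁,ξ₂) = p(ξ₁)·q_{ξ₁}(ξ₂)` with `p ∈ 𝒫₁`
and conditionals `q_{ξ₁} ∈ 𝒫₂(ξ₁)` chosen independently for each `ξ₁`, then for every
`f : Ξ₁×Ξ₂ → ℝ`,
`sup_{μ∈𝒫} E_μ[f] = sup_{p∈𝒫₁} Σ_{ξ₁} p(ξ₁) · sup_{q∈𝒫₂(ξ₁)} Σ_{ξ₂} q(ξ₂) f(ξ₁,ξ₂)`. -/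
theorem rectangular_nested_sup
    (Ξ₁ Ξ₂ : Type*) [Fintype Ξ₁] [Fintype Ξ₂] [Nonempty Ξ₁] [Nonempty Ξ₂]
    (P₁ : Set (Ξ₁ → ℝ)) (hP₁ne : P₁.Nonempty) (hP₁ : P₁ ⊆ stdSimplex ℝ Ξ₁)
    (P₂ : Ξ₁ → Set (Ξ₂ → ℝ)) (hP₂ne : ∀ ξ₁, (P₂ ξ₁).Nonempty)
    (hP₂ : ∀ ξ₁, P₂ ξ₁ ⊆ stdSimplex ℝ Ξ₂)
    (f : Ξ₁ → Ξ₂ → ℝ) :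
    sSup {x : ℝ | ∃ p ∈ P₁, ∃ q : Ξ₁ → (Ξ₂ → ℝ), (∀ ξ₁, q ξ₁ ∈ P₂ ξ₁) ∧
        x = ∑ ξ₁, ∑ ξ₂, p ξ₁ * q ξ₁ ξ₂ * f ξ₁ ξ₂}
      = sSup {x : ℝ | ∃ p ∈ P₁,
          x = ∑ ξ₁, p ξ₁ *
                sSup {y : ℝ | ∃ q ∈ P₂ ξ₁, y = ∑ ξ₂, q ξ₂ * f ξ₁ ξ₂}} := by
  classical
  obtain ⟨C, hfC'⟩ := Finite.exists_le (fun p : Ξ₁ × Ξ₂ => f p.1 p.2)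
  have hfC : ∀ ξ₁ ξ₂, f ξ₁ ξ₂ ≤ C := fun ξ₁ ξ₂ => hfC' (ξ₁, ξ₂)
  have hinner : ∀ ξ₁, ∀ q ∈ P₂ ξ₁, ∑ ξ₂, q ξ₂ * f ξ₁ ξ₂ ≤ C := by
    intro ξ₁ q hq
    have h := hP₂ ξ₁ hq
    calc ∑ ξ₂, q ξ₂ * f ξ₁ ξ₂ ≤ ∑ ξ₂, q ξ₂ * C :=
          Finset.sum_le_sum fun ξ₂ _ => mul_le_mul_of_nonneg_left (hfC ξ₁ ξ₂) (h.1 ξ₂)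
      _ = C := by rw [← Finset.sum_mul, h.2, one_mul]
  set g : Ξ₁ → ℝ := fun ξ₁ => sSup {y : ℝ | ∃ q ∈ P₂ ξ₁, y = ∑ ξ₂, q ξ₂ * f ξ₁ ξ₂} with hg
  have hSne : ∀ ξ₁, {y : ℝ | ∃ q ∈ P₂ ξ₁, y = ∑ ξ₂, q ξ₂ * f ξ₁ ξ₂}.Nonempty := by
    intro ξ₁; obtain ⟨q, hq⟩ := hP₂ne ξ₁; exact ⟨_, q, hq, rfl⟩
  have hSbdd : ∀ ξ₁, BddAbove {y : ℝ | ∃ q ∈ P₂ ξ₁, y = ∑ ξ₂, q ξ₂ * f ξ₁ ξ₂} := by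
    intro ξ₁; exact ⟨C, fun y ⟨q, hq, hy⟩ => hy ▸ hinner ξ₁ q hq⟩
  have hgC : ∀ ξ₁, g ξ₁ ≤ C := fun ξ₁ =>
    csSup_le (hSne ξ₁) fun y ⟨q, hq, hy⟩ => hy ▸ hinner ξ₁ q hq
  have hgle : ∀ ξ₁, ∀ q ∈ P₂ ξ₁, ∑ ξ₂, q ξ₂ * f ξ₁ ξ₂ ≤ g ξ₁ := by
    intro ξ₁ q hq; exact le_csSup (hSbdd ξ₁) ⟨q, hq, rfl⟩
  -- the two outer sets
  have hAne : {x : ℝ | ∃ p ∈ P₁, ∃ q : Ξ₁ → (Ξ₂ → ℝ), (∀ ξ₁, q ξ₁ ∈ P₂ ξ₁) ∧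
      x = ∑ ξ₁, ∑ ξ₂, p ξ₁ * q ξ₁ ξ₂ * f ξ₁ ξ₂}.Nonempty := by
    obtain ⟨p, hp⟩ := hP₁ne
    refine ⟨_, p, hp, fun ξ₁ => (hP₂ne ξ₁).choose, fun ξ₁ => (hP₂ne ξ₁).choose_spec, rfl⟩
  have hBne : {x : ℝ | ∃ p ∈ P₁, x = ∑ ξ₁, p ξ₁ * g ξ₁}.Nonempty := by
    obtain ⟨p, hp⟩ := hP₁ne; exact ⟨_, p, hp, rfl⟩
  have hsum_bound : ∀ p ∈ P₁, ∀ h : Ξ₁ → ℝ, (∀ ξ₁, h ξ₁ ≤ C) →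
      ∑ ξ₁, p ξ₁ * h ξ₁ ≤ C := by
    intro p hp h hh
    have h1 := hP₁ hp
    calc ∑ ξ₁, p ξ₁ * h ξ₁ ≤ ∑ ξ₁, p ξ₁ * C :=
          Finset.sum_le_sum fun ξ₁ _ => mul_le_mul_of_nonneg_left (hh ξ₁) (h1.1 ξ₁)
      _ = C := by rw [← Finset.sum_mul, h1.2, one_mul]
  have hBbdd : BddAbove {x : ℝ | ∃ p ∈ P₁, x = ∑ ξ₁, p ξ₁ * g ξ₁} :=
    ⟨C, fun x ⟨p, hp, hx⟩ => hx ▸ hsum_bound p hp g hgC⟩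
  have hrw : ∀ (p : Ξ₁ → ℝ) (q : Ξ₁ → Ξ₂ → ℝ),
      ∑ ξ₁, ∑ ξ₂, p ξ₁ * q ξ₁ ξ₂ * f ξ₁ ξ₂ = ∑ ξ₁, p ξ₁ * ∑ ξ₂, q ξ₁ ξ₂ * f ξ₁ ξ₂ := by
    intro p q; simp [Finset.mul_sum, mul_assoc]
  have hAbdd : BddAbove {x : ℝ | ∃ p ∈ P₁, ∃ q : Ξ₁ → (Ξ₂ → ℝ), (∀ ξ₁, q ξ₁ ∈ P₂ ξ₁) ∧
      x = ∑ ξ₁, ∑ ξ₂, p ξ₁ * q ξ₁ ξ₂ * f ξ₁ ξ₂} := by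
    refine ⟨C, fun x ⟨p, hp, q, hq, hx⟩ => ?_⟩
    rw [hx, hrw]
    exact hsum_bound p hp _ fun ξ₁ => hinner ξ₁ (q ξ₁) (hq ξ₁)
  apply le_antisymm
  · refine csSup_le hAne fun x ⟨p, hp, q, hq, hx⟩ => ?_
    have h1 : x ≤ ∑ ξ₁, p ξ₁ * g ξ₁ := by
      rw [hx, hrw]
      exact Finset.sum_le_sum fun ξ₁ _ =>
        mul_le_mul_of_nonneg_left (hgle ξ₁ (q ξ₁) (hq ξ₁)) ((hP₁ hp).1 ξ₁)
    exact h1.trans (le_csSup hBbdd ⟨p, hp, rfl⟩)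
  · refine csSup_le hBne fun x ⟨p, hp, hx⟩ => ?_
    refine le_of_forall_pos_le_add fun ε hε => ?_
    have hchoice : ∀ ξ₁, ∃ q ∈ P₂ ξ₁, g ξ₁ - ε < ∑ ξ₂, q ξ₂ * f ξ₁ ξ₂ := by
      intro ξ₁
      obtain ⟨y, ⟨q, hq, hy⟩, hlt⟩ :=
        exists_lt_of_lt_csSup (hSne ξ₁) (show g ξ₁ - ε < g ξ₁ by linarith)
      exact ⟨q, hq, hy ▸ hlt⟩
    choose q hq hqlt using hchoice
    have h1 : x ≤ (∑ ξ₁, ∑ ξ₂, p ξ₁ * q ξ₁ ξ₂ * f ξ₁ ξ₂) + ε := by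
      rw [hx, hrw]
      have : ∑ ξ₁, p ξ₁ * g ξ₁ ≤ ∑ ξ₁, p ξ₁ * (∑ ξ₂, q ξ₁ ξ₂ * f ξ₁ ξ₂ + ε) :=
        Finset.sum_le_sum fun ξ₁ _ => mul_le_mul_of_nonneg_left
          (by linarith [hqlt ξ₁]) ((hP₁ hp).1 ξ₁)
      calc ∑ ξ₁, p ξ₁ * g ξ₁ ≤ ∑ ξ₁, p ξ₁ * (∑ ξ₂, q ξ₁ ξ₂ * f ξ₁ ξ₂ + ε) := this
        _ = (∑ ξ₁, p ξ₁ * ∑ ξ₂, q ξ₁ ξ₂ * f ξ₁ ξ₂) + ε := by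
            simp [mul_add, Finset.sum_add_distrib, ← Finset.sum_mul, (hP₁ hp).2]
    exact h1.trans (add_le_add (le_csSup hAbdd ⟨p, hp, q, hq, rfl⟩) (le_refl ε))
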